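/- arXiv:2402.17994 — 3 statements merged into one kernel-verified Lean document; each statement's English description precedes it below -/
import Mathlib

section
/- There is an absolute constant C > 0 with the following property. Fix integers H ≥ 2, d ≥ 1, ℓ ≥ 1 and a real number δ ≥ 0. Let v₁, …, v_ℓ ∈ ℤ^d be vectors all of whose coordinates have absolute value at most H, and let w ∈ ℝ^d satisfy dist(v_i · w, ℤ) ≤ δ for each 1 ≤ i ≤ ℓ, where v·w denotes the standard inner product. Then one can write w = w_small + w_rat + w_rest, where: every coordinate of w_rat is a rational number whose denominator in lowest terms is at most H^{C·d^C}; ‖w_small‖_∞ ≤ δ · H^{C·d^C}; and v_i · w_rest = 0 for all 1 ≤ i ≤ ℓ. -/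
open scoped BigOperators

/-- Distance from `x` to the nearest integer. -/
noncomputable def distZ (x : ℝ) : ℝ := |x - round x|

private lemma natexp_lemma1 {H d r : ℕ} (hH : 2 ≤ H) (hd : 1 ≤ d) (hrd : r ≤ d) :
    r.factorial * (d * H ^ 2) ^ r ≤ H ^ (7 * d ^ 7) := by
  have hdH : d ≤ H ^ d := le_trans (Nat.le_of_lt (Nat.lt_two_pow_self (n := d))) (Nat.pow_le_pow_left hH d)
  have h1 : r.factorial ≤ H ^ (d * d) := by
    calc r.factorial ≤ d.factorial := Nat.factorial_le hrd
    _ ≤ d ^ d := Nat.factorial_le_pow d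
    _ ≤ (H ^ d) ^ d := Nat.pow_le_pow_left hdH d
    _ = H ^ (d * d) := by rw [← pow_mul]
  have h2 : (d * H ^ 2) ^ r ≤ H ^ ((d + 2) * d) := by
    calc (d * H ^ 2) ^ r ≤ (H ^ d * H ^ 2) ^ r :=
          Nat.pow_le_pow_left (Nat.mul_le_mul_right _ hdH) r
    _ = (H ^ (d + 2)) ^ r := by rw [pow_add]
    _ ≤ (H ^ (d + 2)) ^ d :=
          Nat.pow_le_pow_right (Nat.one_le_two_pow.trans (Nat.pow_le_pow_left hH _)) hrd
    _ = H ^ ((d + 2) * d) := by rw [← pow_mul]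
  have hexp : d * d + (d + 2) * d ≤ 7 * d ^ 7 := by
    have h7 : d ^ 2 ≤ d ^ 7 := Nat.pow_le_pow_right hd (by norm_num)
    nlinarith [hd, h7]
  calc r.factorial * (d * H ^ 2) ^ r ≤ H ^ (d * d) * H ^ ((d + 2) * d) := Nat.mul_le_mul h1 h2
  _ = H ^ (d * d + (d + 2) * d) := (pow_add H _ _).symm
  _ ≤ H ^ (7 * d ^ 7) := Nat.pow_le_pow_right (le_trans one_le_two hH) hexp

private lemma natexp_lemma2 {H d r : ℕ} (hH : 2 ≤ H) (hd : 1 ≤ d) (hrd : r ≤ d) :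
    r ^ 2 * H * (r.factorial * (d * H ^ 2) ^ r) ≤ H ^ (7 * d ^ 7) := by
  have hdH : d ≤ H ^ d := le_trans (Nat.le_of_lt (Nat.lt_two_pow_self (n := d))) (Nat.pow_le_pow_left hH d)
  have h0 : r ^ 2 * H ≤ H ^ (2 * d) * H ^ 1 := by
    have : r ^ 2 ≤ H ^ (2 * d) := by
      calc r ^ 2 ≤ d ^ 2 := Nat.pow_le_pow_left hrd 2
      _ ≤ (H ^ d) ^ 2 := Nat.pow_le_pow_left hdH 2
      _ = H ^ (2 * d) := by rw [← pow_mul, Nat.mul_comm]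
    calc r ^ 2 * H ≤ H ^ (2 * d) * H := Nat.mul_le_mul_right _ this
    _ = H ^ (2 * d) * H ^ 1 := by rw [pow_one]
  have h1 : r.factorial ≤ H ^ (d * d) := by
    calc r.factorial ≤ d.factorial := Nat.factorial_le hrd
    _ ≤ d ^ d := Nat.factorial_le_pow d
    _ ≤ (H ^ d) ^ d := Nat.pow_le_pow_left hdH d
    _ = H ^ (d * d) := by rw [← pow_mul]
  have h2 : (d * H ^ 2) ^ r ≤ H ^ ((d + 2) * d) := by
    calc (d * H ^ 2) ^ r ≤ (H ^ d * H ^ 2) ^ r :=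
          Nat.pow_le_pow_left (Nat.mul_le_mul_right _ hdH) r
    _ = (H ^ (d + 2)) ^ r := by rw [pow_add]
    _ ≤ (H ^ (d + 2)) ^ d :=
          Nat.pow_le_pow_right (Nat.one_le_two_pow.trans (Nat.pow_le_pow_left hH _)) hrd
    _ = H ^ ((d + 2) * d) := by rw [← pow_mul]
  have hexp : 2 * d + 1 + (d * d + (d + 2) * d) ≤ 7 * d ^ 7 := by
    have h7 : d ^ 2 ≤ d ^ 7 := Nat.pow_le_pow_right hd (by norm_num)
    nlinarith [hd, h7]
  calc r ^ 2 * H * (r.factorial * (d * H ^ 2) ^ r)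
      ≤ H ^ (2 * d) * H ^ 1 * (H ^ (d * d) * H ^ ((d + 2) * d)) :=
        Nat.mul_le_mul h0 (Nat.mul_le_mul h1 h2)
  _ = H ^ (2 * d + 1 + (d * d + (d + 2) * d)) := by rw [← pow_add, ← pow_add, ← pow_add]
  _ ≤ H ^ (7 * d ^ 7) := Nat.pow_le_pow_right (le_trans one_le_two hH) hexp

private lemma dot_expand {d : ℕ} {κ : Type*} [Fintype κ] (u : Fin d → ℝ) (t : κ → ℝ)
    (T : κ → Fin d → ℝ) :
    ∑ j, u j * (∑ l, t l * T l j) = ∑ l, (∑ j, u j * T l j) * t l := by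
  simp_rw [Finset.mul_sum]
  rw [Finset.sum_comm]
  refine Finset.sum_congr rfl fun l _ => ?_
  rw [Finset.sum_mul]
  exact Finset.sum_congr rfl fun j _ => by ring

private lemma quad_expand {d : ℕ} {κ : Type*} [Fintype κ] (x : κ → ℝ) (T : κ → Fin d → ℝ) :
    ∑ j, (∑ k, x k * T k j) * (∑ l, x l * T l j)
      = ∑ k, ∑ l, (x k * x l) * (∑ j, T k j * T l j) := by
  simp only [Finset.sum_mul_sum]
  rw [Finset.sum_comm]
  refine Finset.sum_congr rfl fun k _ => ?_
  rw [Finset.sum_comm]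
  refine Finset.sum_congr rfl fun l _ => ?_
  rw [Finset.mul_sum]
  exact Finset.sum_congr rfl fun j _ => by ring

/-- If `w ∈ ℝ^d` nearly annihilates (mod `ℤ`) a family of bounded integer vectors, then `w`
splits as a small part, a bounded-height rational part, and a part exactly annihilated by the
given vectors. -/
theorem small_rational_decomposition :
    ∃ C : ℝ, 0 < C ∧
      ∀ (H d ℓ : ℕ), 2 ≤ H → 1 ≤ d → 1 ≤ ℓ →
      ∀ (δ : ℝ), 0 ≤ δ →
      ∀ (v : Fin ℓ → Fin d → ℤ), (∀ i j, |v i j| ≤ (H : ℤ)) →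
      ∀ (w : Fin d → ℝ), (∀ i, distZ (∑ j, (v i j : ℝ) * w j) ≤ δ) →
      ∃ wsmall wrat wrest : Fin d → ℝ,
        w = wsmall + wrat + wrest ∧
        (∀ j, ∃ q : ℚ, wrat j = (q : ℝ) ∧ (q.den : ℝ) ≤ (H : ℝ) ^ (C * (d : ℝ) ^ C)) ∧
        (∀ j, |wsmall j| ≤ δ * (H : ℝ) ^ (C * (d : ℝ) ^ C)) ∧
        (∀ i, ∑ j, (v i j : ℝ) * wrest j = 0) := by
  refine ⟨7, by norm_num, ?_⟩
  intro H d ℓ hH hd hℓ δ hδ v hv w hw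
  classical
  -- the key power bound, as a real number
  have hHpow : (H : ℝ) ^ ((7 : ℝ) * (d : ℝ) ^ (7 : ℝ)) = (H : ℝ) ^ (7 * d ^ 7 : ℕ) := by
    have h7 : ((7 : ℝ) * (d : ℝ) ^ (7 : ℝ)) = ((7 * d ^ 7 : ℕ) : ℝ) := by
      rw [show (7 : ℝ) = ((7 : ℕ) : ℝ) by norm_num, Real.rpow_natCast]
      push_cast
      ring
    rw [h7, Real.rpow_natCast]
  -- set up the Euclidean space
  set E := EuclideanSpace ℝ (Fin d) with hE
  let R : Fin ℓ → E := fun i => WithLp.toLp 2 (fun j => (v i j : ℝ) : Fin d → ℝ)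
  set S : Submodule ℝ E := Submodule.span ℝ (Set.range R) with hS
  obtain ⟨b, hbsub, hbspan, hbind⟩ := exists_linearIndependent ℝ (Set.range R)
  have hbfin : b.Finite := (Set.finite_range R).subset hbsub
  haveI : Fintype b := hbfin.fintype
  -- orthogonal decomposition of w
  obtain ⟨p, hp, z, hz, hwpz⟩ :=
    S.exists_add_mem_mem_orthogonal (show E from WithLp.toLp 2 w)
  -- the rest part
  have hzR : ∀ i, ∑ j, (v i j : ℝ) * z j = 0 := by
    intro i
    have h1 : R i ∈ S := Submodule.subset_span (Set.mem_range_self i)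
    have h2 := (Submodule.mem_orthogonal S z).mp hz (R i) h1
    rw [PiLp.inner_apply] at h2
    simpa [RCLike.inner_apply, conj_trivial, R, mul_comm] using h2
  -- coordinates of p
  have hpb : p ∈ Submodule.span ℝ (Set.range ((↑) : b → E)) := by
    rw [Subtype.range_coe, hbspan]; exact hp
  obtain ⟨t, ht⟩ := (Submodule.mem_span_range_iff_exists_fun ℝ).mp hpb
  -- indices for basis vectors
  have hidx : ∀ k : b, ∃ i, R i = (k : E) := fun k => hbsub k.2
  choose idx hidxeq using hidx
  let A : Matrix b (Fin d) ℤ := fun k j => v (idx k) j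
  have hT : ∀ (k : b) (j : Fin d), (k : E) j = (A k j : ℝ) := by
    intro k j
    have := congrArg (fun (x : E) => x j) (hidxeq k)
    simpa [R, A] using this.symm
  -- Gram matrix
  let G₀ : Matrix b b ℤ := A * A.transpose
  let G : Matrix b b ℝ := G₀.map (Int.cast : ℤ → ℝ)
  have hGkl : ∀ k l, G k l = ∑ j, (A k j : ℝ) * (A l j : ℝ) := by
    intro k l
    simp [G, G₀, Matrix.mul_apply, Matrix.map_apply, Matrix.transpose_apply]
  -- evaluation as a linear map
  let φ : Fin d → (E →ₗ[ℝ] ℝ) := fun j =>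
    (LinearMap.proj j).comp (WithLp.linearEquiv 2 ℝ (Fin d → ℝ)).toLinearMap
  have hφ : ∀ (j : Fin d) (x : E), φ j x = x j := fun j x => rfl
  -- G is invertible
  have hdet0 : G.det ≠ 0 := by
    intro hdet
    obtain ⟨x, hx0, hGx⟩ := (Matrix.exists_mulVec_eq_zero_iff).mpr hdet
    have key : ∑ j, (∑ k, x k * (A k j : ℝ)) * (∑ k, x k * (A k j : ℝ)) = 0 := by
      rw [quad_expand x (fun k j => (A k j : ℝ))]
      have : ∀ k, ∑ l, (x k * x l) * (∑ j, (A k j : ℝ) * (A l j : ℝ))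
          = x k * (G.mulVec x k) := by
        intro k
        rw [Matrix.mulVec, dotProduct, Finset.mul_sum]
        exact Finset.sum_congr rfl fun l _ => by rw [hGkl]; ring
      rw [Finset.sum_congr rfl fun k _ => this k, hGx]
      simp
    have hzero : ∀ j, ∑ k, x k * (A k j : ℝ) = 0 := by
      intro j
      have hnn : ∀ j ∈ Finset.univ (α := Fin d),
          0 ≤ (∑ k, x k * (A k j : ℝ)) * (∑ k, x k * (A k j : ℝ)) :=
        fun j _ => mul_self_nonneg _
      have := (Finset.sum_eq_zero_iff_of_nonneg hnn).mp key j (Finset.mem_univ j)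
      exact mul_self_eq_zero.mp this
    have hsum0 : ∑ k : b, x k • (k : E) = 0 := by
      have hφ0 : ∀ j : Fin d, φ j (∑ k : b, x k • (k : E)) = 0 := by
        intro j
        rw [map_sum]
        have hterm : ∀ k : b, φ j (x k • (k : E)) = x k * (A k j : ℝ) := by
          intro k
          rw [map_smul, smul_eq_mul]
          congr 1
          exact hT k j
        rw [Finset.sum_congr rfl fun k _ => hterm k]
        exact hzero j
      have h0 : (WithLp.linearEquiv 2 ℝ (Fin d → ℝ)) (∑ k : b, x k • (k : E)) = 0 :=
        funext fun j => hφ0 j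
      exact (WithLp.linearEquiv 2 ℝ (Fin d → ℝ)).map_eq_zero_iff.mp h0
    have := (Fintype.linearIndependent_iff.mp hbind) x hsum0
    exact hx0 (funext this)
  have hGunit : IsUnit G.det := isUnit_iff_ne_zero.mpr hdet0
  -- determinant is a nonzero integer
  have hGdet : G.det = ((G₀.det : ℤ) : ℝ) := by
    have h := RingHom.map_det (Int.castRingHom ℝ) G₀
    rw [RingHom.mapMatrix_apply] at h
    exact h.symm
  have hD0 : G₀.det ≠ 0 := by
    intro h
    rw [hGdet, h] at hdet0
    exact hdet0 (by norm_num)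
  have hDabs : (1 : ℝ) ≤ |((G₀.det : ℤ) : ℝ)| := by
    have : (1 : ℤ) ≤ |G₀.det| := Int.one_le_abs hD0
    calc (1 : ℝ) = ((1 : ℤ) : ℝ) := by norm_num
    _ ≤ ((|G₀.det| : ℤ) : ℝ) := Int.cast_le.mpr this
    _ = |((G₀.det : ℤ) : ℝ)| := by push_cast; ring
  -- coordinates of w and p as plain functions
  have hwj : ∀ j, w j = p j + z j := by
    intro j
    have := congrArg (fun (x : E) => x j) hwpz
    exact this
  have hPsum : ∀ j, p j = ∑ k : b, t k * (A k j : ℝ) := by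
    intro j
    have h := congrArg (φ j) ht
    rw [map_sum] at h
    have hterm : ∀ k : b, φ j (t k • (k : E)) = t k * (A k j : ℝ) := by
      intro k
      rw [map_smul, smul_eq_mul]
      congr 1
      exact hT k j
    rw [Finset.sum_congr rfl fun k _ => hterm k] at h
    exact h.symm
  -- the linear system
  let μ : b → ℝ := fun k => ∑ j, (A k j : ℝ) * p j
  have hμt : G.mulVec t = μ := by
    funext k
    have : μ k = ∑ l, (∑ j, (A k j : ℝ) * (A l j : ℝ)) * t l := by
      simp only [μ]
      rw [Finset.sum_congr rfl fun j _ => by rw [hPsum j]]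
      exact dot_expand (fun j => (A k j : ℝ)) t (fun l j => (A l j : ℝ))
    rw [this, Matrix.mulVec, dotProduct]
    exact Finset.sum_congr rfl fun l _ => by rw [hGkl]
  -- μ is close to integers
  have hμw : ∀ k, μ k = ∑ j, (v (idx k) j : ℝ) * w j := by
    intro k
    have : ∑ j, (v (idx k) j : ℝ) * w j
        = ∑ j, (A k j : ℝ) * p j + ∑ j, (v (idx k) j : ℝ) * z j := by
      rw [← Finset.sum_add_distrib]
      refine Finset.sum_congr rfl fun j _ => ?_
      show (v (idx k) j : ℝ) * w j
          = (v (idx k) j : ℝ) * p j + (v (idx k) j : ℝ) * z j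
      rw [hwj j]; ring
    rw [this, hzR (idx k), add_zero]
  let n : b → ℤ := fun k => round (μ k)
  let ε : b → ℝ := fun k => μ k - (n k : ℝ)
  have hεδ : ∀ k, |ε k| ≤ δ := by
    intro k
    have := hw (idx k)
    rw [distZ, ← hμw k] at this
    exact this
  -- solve the system
  let Ginv := G⁻¹
  have hGinvG : Ginv * G = 1 := Matrix.nonsing_inv_mul G hGunit
  let c : b → ℝ := Ginv.mulVec ε
  let a : b → ℝ := Ginv.mulVec (fun k => (n k : ℝ))
  have hca : ∀ k, c k + a k = t k := by
    have h1 : (fun k => c k + a k) = Ginv.mulVec μ := by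
      funext k
      have : ε + (fun k => (n k : ℝ)) = μ := by funext k; simp [ε]
      rw [show c k + a k = (Ginv.mulVec ε + Ginv.mulVec (fun k => (n k : ℝ))) k from rfl,
        ← Matrix.mulVec_add, this]
    have h2 : Ginv.mulVec μ = t := by
      rw [← hμt, Matrix.mulVec_mulVec, hGinvG, Matrix.one_mulVec]
    intro k
    rw [congrFun h1 k, congrFun h2 k]
  -- entry bounds
  set r : ℕ := Fintype.card b with hr
  have hrd : r ≤ d := by
    have := hbind.fintype_card_le_finrank
    rwa [finrank_euclideanSpace, Fintype.card_fin] at this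
  have hEnt : ∀ k l, |G k l| ≤ (d : ℝ) * (H : ℝ) ^ 2 := by
    intro k l
    rw [hGkl]
    calc |∑ j, (A k j : ℝ) * (A l j : ℝ)| ≤ ∑ j, |(A k j : ℝ) * (A l j : ℝ)| :=
          Finset.abs_sum_le_sum_abs _ _
    _ ≤ ∑ _j : Fin d, (H : ℝ) * (H : ℝ) := by
          refine Finset.sum_le_sum fun j _ => ?_
          rw [abs_mul]
          have h1 : |(A k j : ℝ)| ≤ (H : ℝ) := by
            have := hv (idx k) j
            calc |(A k j : ℝ)| = ((|v (idx k) j| : ℤ) : ℝ) := by push_cast [A]; ring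
            _ ≤ ((H : ℤ) : ℝ) := Int.cast_le.mpr this
            _ = (H : ℝ) := by push_cast; ring
          have h2 : |(A l j : ℝ)| ≤ (H : ℝ) := by
            have := hv (idx l) j
            calc |(A l j : ℝ)| = ((|v (idx l) j| : ℤ) : ℝ) := by push_cast [A]; ring
            _ ≤ ((H : ℤ) : ℝ) := Int.cast_le.mpr this
            _ = (H : ℝ) := by push_cast; ring
          exact mul_le_mul h1 h2 (abs_nonneg _) (by positivity)
    _ = (d : ℝ) * (H : ℝ) ^ 2 := by
          rw [Finset.sum_const, Finset.card_univ, Fintype.card_fin, nsmul_eq_mul]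
          ring
  have hdH2pos : (1 : ℝ) ≤ (d : ℝ) * (H : ℝ) ^ 2 := by
    have h1 : (1 : ℝ) ≤ (d : ℝ) := by exact_mod_cast hd
    have h2 : (1 : ℝ) ≤ (H : ℝ) ^ 2 := by
      have : (1 : ℝ) ≤ (H : ℝ) := by exact_mod_cast le_trans one_le_two hH
      nlinarith
    nlinarith
  -- bound on the adjugate entries
  have hAdj : ∀ k l, |G.adjugate k l| ≤ (r.factorial : ℝ) * ((d : ℝ) * (H : ℝ) ^ 2) ^ r := by
    intro k l
    rw [Matrix.adjugate_apply]
    have hx : ∀ i j, |(G.updateRow l (Pi.single k 1)) i j| ≤ (d : ℝ) * (H : ℝ) ^ 2 := by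
      intro i j
      by_cases hil : i = l
      · subst hil
        rw [Matrix.updateRow_self]
        by_cases hjk : j = k
        · subst hjk; simp [Pi.single_eq_same]; exact hdH2pos
        · rw [Pi.single_eq_of_ne hjk]; simpa using le_trans zero_le_one hdH2pos
      · rw [Matrix.updateRow_ne hil]; exact hEnt i j
    have hx' : ∀ i j, AbsoluteValue.abs ((G.updateRow l (Pi.single k 1)) i j)
        ≤ (d : ℝ) * (H : ℝ) ^ 2 := fun i j => hx i j
    have hdet := Matrix.det_le hx'
    rw [nsmul_eq_mul] at hdet
    exact hdet
  -- bound on |det G₀|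
  have hDet : |((G₀.det : ℤ) : ℝ)| ≤ (r.factorial : ℝ) * ((d : ℝ) * (H : ℝ) ^ 2) ^ r := by
    rw [← hGdet]
    have hx' : ∀ i j, AbsoluteValue.abs (G i j) ≤ (d : ℝ) * (H : ℝ) ^ 2 :=
      fun i j => hEnt i j
    have hdet := Matrix.det_le hx'
    rw [nsmul_eq_mul] at hdet
    exact hdet
  -- inverse entries
  have hGinv_eq : ∀ k l, Ginv k l = (((G₀.det : ℤ) : ℝ))⁻¹ * G.adjugate k l := by
    intro k l
    rw [show Ginv = G⁻¹ from rfl, Matrix.inv_def, Ring.inverse_eq_inv, hGdet]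
    simp [Matrix.smul_apply, smul_eq_mul]
  have hGinv_bd : ∀ k l, |Ginv k l| ≤ (r.factorial : ℝ) * ((d : ℝ) * (H : ℝ) ^ 2) ^ r := by
    intro k l
    rw [hGinv_eq, abs_mul, abs_inv]
    calc |((G₀.det : ℤ) : ℝ)|⁻¹ * |G.adjugate k l| ≤ 1 * |G.adjugate k l| := by
          apply mul_le_mul_of_nonneg_right _ (abs_nonneg _)
          rw [inv_le_one_iff₀]  -- might not exist; fix later
          right; exact hDabs
    _ = |G.adjugate k l| := one_mul _
    _ ≤ _ := hAdj k l
  -- the small coefficients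
  have hc_bd : ∀ k, |c k| ≤ δ * ((r : ℝ) * ((r.factorial : ℝ) * ((d : ℝ) * (H : ℝ) ^ 2) ^ r)) := by
    intro k
    calc |c k| = |∑ l, Ginv k l * ε l| := rfl
    _ ≤ ∑ l, |Ginv k l * ε l| := Finset.abs_sum_le_sum_abs _ _
    _ ≤ ∑ _l : b, (r.factorial : ℝ) * ((d : ℝ) * (H : ℝ) ^ 2) ^ r * δ := by
          refine Finset.sum_le_sum fun l _ => ?_
          rw [abs_mul]
          exact mul_le_mul (hGinv_bd k l) (hεδ l) (abs_nonneg _)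
            (by positivity)
    _ = δ * ((r : ℝ) * ((r.factorial : ℝ) * ((d : ℝ) * (H : ℝ) ^ 2) ^ r)) := by
          rw [Finset.sum_const, Finset.card_univ, ← hr]
          simp [nsmul_eq_mul]; ring
  -- define the three parts
  refine ⟨(fun j => ∑ k : b, c k * (A k j : ℝ)),
    (fun j => ∑ k : b, a k * (A k j : ℝ)), (fun j => z j), ?_, ?_, ?_, ?_⟩
  · -- decomposition
    funext j
    have : (∑ k : b, c k * (A k j : ℝ)) + (∑ k : b, a k * (A k j : ℝ))
        = ∑ k : b, t k * (A k j : ℝ) := by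
      rw [← Finset.sum_add_distrib]
      exact Finset.sum_congr rfl fun k _ => by rw [← hca k]; ring
    show w j = _
    simp only [Pi.add_apply]
    rw [this, ← hPsum j]
    exact hwj j
  · -- rationality
    intro j
    set D : ℤ := G₀.det with hDdef
    set m : ℤ := ∑ k : b, (∑ l : b, G₀.adjugate k l * n l) * A k j with hm
    have ha_eq : ∀ k, a k = (((D : ℤ) : ℝ))⁻¹ * ∑ l, (G₀.adjugate k l : ℝ) * (n l : ℝ) := by
      intro k
      have hadjmap : ∀ k l, G.adjugate k l = ((G₀.adjugate k l : ℤ) : ℝ) := by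
        intro k l
        have h := RingHom.map_adjugate (Int.castRingHom ℝ) G₀
        rw [RingHom.mapMatrix_apply, RingHom.mapMatrix_apply] at h
        have h2 : G.adjugate = (G₀.adjugate).map (Int.cast : ℤ → ℝ) := h.symm
        rw [h2, Matrix.map_apply]
      calc a k = ∑ l, Ginv k l * (n l : ℝ) := rfl
      _ = ∑ l, ((D : ℝ))⁻¹ * ((G₀.adjugate k l : ℝ) * (n l : ℝ)) := by
            refine Finset.sum_congr rfl fun l _ => ?_
            rw [hGinv_eq, hadjmap]; ring
      _ = ((D : ℝ))⁻¹ * ∑ l, (G₀.adjugate k l : ℝ) * (n l : ℝ) := by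
            rw [Finset.mul_sum]
    have hwr : (∑ k : b, a k * (A k j : ℝ)) = ((m : ℤ) : ℝ) / ((D : ℤ) : ℝ) := by
      rw [hm]
      push_cast
      rw [Finset.sum_div]
      refine Finset.sum_congr rfl fun k _ => ?_
      rw [ha_eq k]
      rw [div_eq_mul_inv]
      ring
    refine ⟨(m : ℚ) / (D : ℚ), ?_, ?_⟩
    · show (∑ k : b, a k * (A k j : ℝ)) = _
      rw [hwr]
      push_cast
      ring
    · have hdvd : (((m : ℚ) / (D : ℚ)).den : ℤ) ∣ D := by
        rw [← Rat.divInt_eq_div]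
        exact Rat.den_dvd m D
      have hden : (((m : ℚ) / (D : ℚ)).den : ℤ) ≤ |D| := by
        refine Int.le_of_dvd (abs_pos.mpr hD0) ((dvd_abs _ _).mpr hdvd)
      have hden' : ((((m : ℚ) / (D : ℚ)).den : ℕ) : ℝ) ≤ |((D : ℤ) : ℝ)| := by
        calc ((((m : ℚ) / (D : ℚ)).den : ℕ) : ℝ) = (((((m : ℚ) / (D : ℚ)).den : ℤ)) : ℝ) := by
              push_cast; ring
        _ ≤ ((|D| : ℤ) : ℝ) := Int.cast_le.mpr hden
        _ = |((D : ℤ) : ℝ)| := by push_cast; ring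
      rw [hHpow]
      calc ((((m : ℚ) / (D : ℚ)).den : ℕ) : ℝ) ≤ |((D : ℤ) : ℝ)| := hden'
      _ ≤ (r.factorial : ℝ) * ((d : ℝ) * (H : ℝ) ^ 2) ^ r := hDet
      _ ≤ ((H : ℝ)) ^ (7 * d ^ 7 : ℕ) := by
            have := natexp_lemma1 hH hd hrd
            calc (r.factorial : ℝ) * ((d : ℝ) * (H : ℝ) ^ 2) ^ r
                = ((r.factorial * (d * H ^ 2) ^ r : ℕ) : ℝ) := by push_cast; ring
            _ ≤ ((H ^ (7 * d ^ 7) : ℕ) : ℝ) := Nat.cast_le.mpr this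
            _ = (H : ℝ) ^ (7 * d ^ 7 : ℕ) := by push_cast; ring
  · -- smallness
    intro j
    rw [hHpow]
    calc |∑ k : b, c k * (A k j : ℝ)| ≤ ∑ k : b, |c k * (A k j : ℝ)| :=
          Finset.abs_sum_le_sum_abs _ _
    _ ≤ ∑ _k : b, (δ * ((r : ℝ) * ((r.factorial : ℝ) * ((d : ℝ) * (H : ℝ) ^ 2) ^ r))) * (H : ℝ) := by
          refine Finset.sum_le_sum fun k _ => ?_
          rw [abs_mul]
          have h1 : |(A k j : ℝ)| ≤ (H : ℝ) := by
            have := hv (idx k) j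
            calc |(A k j : ℝ)| = ((|v (idx k) j| : ℤ) : ℝ) := by push_cast [A]; ring
            _ ≤ ((H : ℤ) : ℝ) := Int.cast_le.mpr this
            _ = (H : ℝ) := by push_cast; ring
          exact mul_le_mul (hc_bd k) h1 (abs_nonneg _) (by positivity)
    _ = δ * ((r : ℝ) ^ 2 * (H : ℝ) * ((r.factorial : ℝ) * ((d : ℝ) * (H : ℝ) ^ 2) ^ r)) := by
          rw [Finset.sum_const, Finset.card_univ, ← hr]
          simp [nsmul_eq_mul]; ring
    _ ≤ δ * (H : ℝ) ^ (7 * d ^ 7 : ℕ) := by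
          apply mul_le_mul_of_nonneg_left _ hδ
          have := natexp_lemma2 hH hd hrd
          calc (r : ℝ) ^ 2 * (H : ℝ) * ((r.factorial : ℝ) * ((d : ℝ) * (H : ℝ) ^ 2) ^ r)
              = ((r ^ 2 * H * (r.factorial * (d * H ^ 2) ^ r) : ℕ) : ℝ) := by push_cast; ring
          _ ≤ ((H ^ (7 * d ^ 7) : ℕ) : ℝ) := Nat.cast_le.mpr this
          _ = (H : ℝ) ^ (7 * d ^ 7 : ℕ) := by push_cast; ring
  · -- annihilation
    intro i
    exact hzR i
end

section
/- There is an absolute constant C > 0 with the following property. For every positive integer d and every finite subset A ⊆ (ℝ/ℤ)^d, there exists a finite set T ⊆ ℤ^d with |T| ≤ C·log(|A| + 2) such that for every nonzero w ∈ A there exists t ∈ T with ‖t₁w₁ + ⋯ + t_d w_d‖_{ℝ/ℤ} ≥ 1/4, where the sum t₁w₁ + ⋯ + t_d w_d is taken in ℝ/ℤ using the integer scalar action. -/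
open scoped BigOperators

lemma coe_eq_self (x : ℝ) : ((x - round x : ℝ) : AddCircle (1:ℝ)) = (x : AddCircle (1:ℝ)) := by
  have h0 : ((round x : ℝ) : AddCircle (1:ℝ)) = 0 := by
    rw [QuotientAddGroup.eq_zero_iff]
    exact ⟨round x, by simp⟩
  rw [QuotientAddGroup.mk_sub, h0, sub_zero]

lemma exists_lift (z : AddCircle (1:ℝ)) : ∃ r : ℝ, (r : AddCircle (1:ℝ)) = z ∧ |r| = ‖z‖ := by
  obtain ⟨x, rfl⟩ := QuotientAddGroup.mk_surjective z
  refine ⟨x - round x, coe_eq_self x, ?_⟩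
  rw [← coe_eq_self x]
  exact ((AddCircle.norm_coe_eq_abs_iff 1 one_ne_zero).mpr (by simpa using abs_sub_round x)).symm

lemma norm_double {z : AddCircle (1:ℝ)} (h : ‖z‖ ≤ 1/4) : ‖z + z‖ = 2 * ‖z‖ := by
  obtain ⟨r, hr, hn⟩ := exists_lift z
  have hr4 : |r| ≤ 1/4 := hn ▸ h
  have habs : |r + r| ≤ |(1:ℝ)|/2 := by
    rw [abs_one]
    calc |r + r| ≤ |r| + |r| := abs_add_le _ _
    _ ≤ 1/2 := by linarith
  have : ((r + r : ℝ) : AddCircle (1:ℝ)) = z + z := by rw [QuotientAddGroup.mk_add, hr]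
  rw [← this, (AddCircle.norm_coe_eq_abs_iff 1 one_ne_zero).mpr habs, ← hn]
  have : r + r = 2 * r := by ring
  rw [this, abs_mul, abs_two]

lemma exists_zsmul (x : AddCircle (1:ℝ)) (hx : x ≠ 0) : ∃ n : ℤ, 1/4 ≤ ‖n • x‖ := by
  by_contra hcon
  push_neg at hcon
  have hpos : 0 < ‖x‖ := norm_pos_iff.mpr hx
  have key : ∀ k : ℕ, ‖((2:ℤ)^k) • x‖ = 2^k * ‖x‖ := by
    intro k
    induction k with
    | zero => simp
    | succ k ih =>
      have h1 : ((2:ℤ)^(k+1)) • x = ((2:ℤ)^k) • x + ((2:ℤ)^k) • x := by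
        rw [← add_zsmul]; ring_nf
      rw [h1, norm_double (le_of_lt (hcon _)), ih]; ring
  obtain ⟨m, hm⟩ := Archimedean.arch (1/4 : ℝ) hpos
  have hmle : (m : ℝ) * ‖x‖ ≤ 2^m * ‖x‖ := by
    have : (m:ℝ) ≤ 2^m := by exact_mod_cast Nat.le_of_lt (Nat.lt_two_pow_self (n := m))
    nlinarith
  have := hcon ((2:ℤ)^m)
  rw [key m] at this
  have hm' : (1/4:ℝ) ≤ m * ‖x‖ := by simpa [nsmul_eq_mul] using hm
  linarith

noncomputable def phiHom {d : ℕ} (w : Fin d → AddCircle (1:ℝ)) : (Fin d → ℤ) →+ AddCircle (1:ℝ) where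
  toFun t := ∑ i, t i • w i
  map_zero' := by simp
  map_add' t s := by
    simp only [Pi.add_apply, add_zsmul]
    rw [Finset.sum_add_distrib]

@[simp] lemma phiHom_apply {d : ℕ} (w : Fin d → AddCircle (1:ℝ)) (t : Fin d → ℤ) :
    phiHom w t = ∑ i, t i • w i := rfl

lemma exists_detect {d : ℕ} (w : Fin d → AddCircle (1:ℝ)) (hw : w ≠ 0) :
    ∃ t : Fin d → ℤ, 1/4 ≤ ‖phiHom w t‖ := by
  classical
  obtain ⟨j, hj⟩ := Function.ne_iff.mp hw
  obtain ⟨n, hn⟩ := exists_zsmul (w j) (by simpa using hj)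
  refine ⟨Pi.single j n, ?_⟩
  have : phiHom w (Pi.single j n) = n • w j := by
    rw [phiHom_apply, Finset.sum_eq_single j]
    · simp
    · intro i _ hij; simp [Pi.single_eq_of_ne hij]
    · simp
  rw [this]; exact hn

lemma halving {d : ℕ} (S : Finset (Fin d → AddCircle (1:ℝ))) (hS : ∀ w ∈ S, w ≠ 0) :
    ∃ t : Fin d → ℤ, ∃ D ⊆ S, S.card ≤ 2 * D.card ∧ ∀ w ∈ D, 1/8 ≤ ‖phiHom w t‖ := by
  classical
  rcases S.eq_empty_or_nonempty with rfl | hne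
  · exact ⟨0, ∅, by simp⟩
  set g : (Fin d → AddCircle (1:ℝ)) → (Fin d → ℤ) := fun w => if h : w ≠ 0 then (exists_detect w h).choose else 0 with hgdef
  have hg : ∀ w ∈ S, 1/4 ≤ ‖phiHom w (g w)‖ := by
    intro w hw
    have h := hS w hw
    simp only [hgdef, dif_pos h]
    exact (exists_detect w h).choose_spec
  set tE : Finset (Fin d → AddCircle (1:ℝ)) → (Fin d → ℤ) := fun E => ∑ v ∈ E, g v with htE
  -- claim 1
  have claim1 : ∀ w ∈ S,
      2^(S.card - 1) ≤ ((S.powerset).filter (fun E => 1/8 ≤ ‖phiHom w (tE E)‖)).card := by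
    intro w hw
    have hcardpow : ((S.erase w).powerset).card = 2^(S.card - 1) := by
      rw [Finset.card_powerset, Finset.card_erase_of_mem hw]
    rw [← hcardpow]
    apply Finset.card_le_card_of_injOn
      (fun E' => if 1/8 ≤ ‖phiHom w (tE E')‖ then E' else insert w E')
    · intro E' hE'
      simp only [Finset.mem_coe, Finset.mem_powerset] at hE' ⊢
      have hwE' : w ∉ E' := fun hc => (Finset.notMem_erase w S) (hE' hc)
      have hE'S : E' ⊆ S := hE'.trans (Finset.erase_subset w S)
      by_cases hgood : 1/8 ≤ ‖phiHom w (tE E')‖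
      · rw [if_pos hgood]
        exact Finset.mem_filter.mpr ⟨Finset.mem_powerset.mpr hE'S, hgood⟩
      · rw [if_neg hgood]
        refine Finset.mem_filter.mpr ⟨Finset.mem_powerset.mpr (Finset.insert_subset hw hE'S), ?_⟩
        have hsum : tE (insert w E') = g w + tE E' := Finset.sum_insert hwE'
        rw [hsum, map_add]
        push_neg at hgood
        have h4 := hg w hw
        have htri : ‖phiHom w (g w)‖ - ‖-(phiHom w (tE E'))‖ ≤
            ‖phiHom w (g w) - -(phiHom w (tE E'))‖ := norm_sub_norm_le _ _
        rw [sub_neg_eq_add, norm_neg] at htri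
        linarith
    · intro E1 h1 E2 h2 heq
      simp only [Finset.mem_coe, Finset.mem_powerset] at h1 h2
      have hw1 : w ∉ E1 := fun hc => (Finset.notMem_erase w S) (h1 hc)
      have hw2 : w ∉ E2 := fun hc => (Finset.notMem_erase w S) (h2 hc)
      have key : ∀ E : Finset (Fin d → AddCircle (1:ℝ)), w ∉ E →
          ((if 1/8 ≤ ‖phiHom w (tE E)‖ then E else insert w E).erase w) = E := by
        intro E hE
        split
        · exact Finset.erase_eq_of_notMem hE
        · exact Finset.erase_insert hE
      calc E1 = _ := (key E1 hw1).symm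
        _ = _ := by simp only at heq; rw [heq]
        _ = E2 := key E2 hw2
  have hsum : S.card * 2^(S.card - 1) ≤
      ∑ E ∈ S.powerset, (S.filter (fun w => 1/8 ≤ ‖phiHom w (tE E)‖)).card := by
    have hcomm : ∑ E ∈ S.powerset, (S.filter (fun w => 1/8 ≤ ‖phiHom w (tE E)‖)).card
        = ∑ w ∈ S, ((S.powerset).filter (fun E => 1/8 ≤ ‖phiHom w (tE E)‖)).card := by
      simp only [Finset.card_filter]
      exact Finset.sum_comm
    rw [hcomm]
    calc S.card * 2^(S.card-1) = ∑ _w ∈ S, 2^(S.card-1) := by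
          rw [Finset.sum_const, smul_eq_mul]
      _ ≤ _ := Finset.sum_le_sum claim1
  have hex : ∃ E ∈ S.powerset,
      S.card ≤ 2 * (S.filter (fun w => 1/8 ≤ ‖phiHom w (tE E)‖)).card := by
    by_contra hcon
    push_neg at hcon
    obtain ⟨m, hm⟩ : ∃ m, S.card = m + 1 :=
      ⟨S.card - 1, by have := Finset.card_pos.mpr hne; omega⟩
    have hP : ∑ E ∈ S.powerset, 2 * (S.filter (fun w => 1/8 ≤ ‖phiHom w (tE E)‖)).card
        ≤ ∑ _E ∈ S.powerset, (S.card - 1) :=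
      Finset.sum_le_sum (fun E hE => by have := hcon E hE; omega)
    rw [Finset.sum_const, Finset.card_powerset, smul_eq_mul] at hP
    have hL : ∑ E ∈ S.powerset, 2 * (S.filter (fun w => 1/8 ≤ ‖phiHom w (tE E)‖)).card
        = 2 * ∑ E ∈ S.powerset, (S.filter (fun w => 1/8 ≤ ‖phiHom w (tE E)‖)).card :=
      (Finset.mul_sum _ _ _).symm
    rw [hL] at hP
    have hQ : 0 < 2^m := Nat.pow_pos (by norm_num)
    rw [hm] at hsum hP
    simp only [Nat.add_sub_cancel] at hsum hP
    rw [pow_succ] at hP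
    nlinarith [hsum, hP, hQ]
  obtain ⟨E, _hE, hcard⟩ := hex
  exact ⟨tE E, S.filter (fun w => 1/8 ≤ ‖phiHom w (tE E)‖), Finset.filter_subset _ _,
    hcard, fun w hw => (Finset.mem_filter.mp hw).2⟩

lemma greedy {d : ℕ} : ∀ n : ℕ, ∀ S : Finset (Fin d → AddCircle (1:ℝ)), S.card ≤ n →
    (∀ w ∈ S, w ≠ 0) →
    ∃ T : Finset (Fin d → ℤ), T.card ≤ 2 * Nat.size n ∧
      ∀ w ∈ S, ∃ t ∈ T, 1/4 ≤ ‖phiHom w t‖ := by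
  intro n
  induction n using Nat.strong_induction_on with
  | _ n ih =>
  intro S hcard hS
  classical
  rcases S.eq_empty_or_nonempty with rfl | hne
  · exact ⟨∅, by simp, by simp⟩
  have hn : 1 ≤ n := le_trans (Finset.card_pos.mpr hne) hcard
  obtain ⟨t, D, hDS, hhalf, hDdet⟩ := halving S hS
  set S' := S \ D with hS'
  have hsd : S'.card + D.card = S.card := Finset.card_sdiff_add_card_eq_card hDS
  have hS'card : S'.card ≤ n / 2 := by omega
  obtain ⟨T', hT'card, hT'det⟩ := ih (n/2) (Nat.div_lt_self hn one_lt_two) S' hS'card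
    (fun w hw => hS w (Finset.mem_sdiff.mp hw).1)
  refine ⟨insert t (insert (fun i => 2 * t i) T'), ?_, ?_⟩
  · have hsz : Nat.size (n/2) + 1 ≤ Nat.size n := by
      have h0 : 0 < Nat.size n := Nat.size_pos.mpr hn
      have hlt : n < 2 ^ Nat.size n := Nat.lt_size_self n
      have h2 : 2 ^ Nat.size n = 2 ^ (Nat.size n - 1) * 2 := by
        rw [← pow_succ]
        congr 1
        omega
      have hdiv : n / 2 < 2 ^ (Nat.size n - 1) := by omega
      have := Nat.size_le.mpr hdiv
      omega
    have hc1 := Finset.card_insert_le t (insert (fun i => 2 * t i) T')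
    have hc2 := Finset.card_insert_le (fun i => (2:ℤ) * t i) T'
    omega
  · intro w hw
    by_cases hwD : w ∈ D
    · have h8 := hDdet w hwD
      by_cases h4 : 1/4 ≤ ‖phiHom w t‖
      · exact ⟨t, Finset.mem_insert_self _ _, h4⟩
      · refine ⟨fun i => 2 * t i, Finset.mem_insert_of_mem (Finset.mem_insert_self _ _), ?_⟩
        have ht2 : phiHom w (fun i => 2 * t i) = phiHom w t + phiHom w t := by
          have h2t : (fun i => 2 * t i) = t + t := by funext i; simp [two_mul]
          rw [h2t, map_add]
        rw [ht2, norm_double (le_of_lt (not_le.mp h4))]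
        linarith
    · obtain ⟨t', ht'T, ht'⟩ := hT'det w (Finset.mem_sdiff.mpr ⟨hw, hwD⟩)
      exact ⟨t', Finset.mem_insert_of_mem (Finset.mem_insert_of_mem ht'T), ht'⟩

lemma size_log_bound (n : ℕ) : (2 * Nat.size n : ℝ) ≤ 6 * Real.log (n + 2) := by
  have hl2 : (0.6931471803 : ℝ) < Real.log 2 := Real.log_two_gt_d9
  have hL : Real.log 2 ≤ Real.log (n + 2) := by
    apply Real.log_le_log (by norm_num)
    have hn0 : (0:ℝ) ≤ (n:ℝ) := Nat.cast_nonneg n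
    linarith
  rcases Nat.eq_zero_or_pos n with rfl | hn
  · rw [Nat.size_zero]
    norm_num
    nlinarith
  · set s := Nat.size n with hs
    have hs1 : 1 ≤ s := Nat.size_pos.mpr hn
    have h2 : 2 ^ (s - 1) ≤ n := by
      by_contra hcon
      push_neg at hcon
      have := Nat.size_le.mpr hcon
      omega
    have hlog : ((s:ℝ) - 1) * Real.log 2 ≤ Real.log (n + 2) := by
      have hcast : ((s:ℝ) - 1) * Real.log 2 = Real.log ((2:ℝ) ^ (s-1)) := by
        rw [Real.log_pow]
        rw [Nat.cast_sub hs1]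
        push_cast
        ring
      rw [hcast]
      apply Real.log_le_log (by positivity)
      have h2' : ((2:ℝ))^(s-1) ≤ (n:ℝ) := by exact_mod_cast h2
      linarith
    have hsr : (1:ℝ) ≤ (s:ℝ) := by exact_mod_cast hs1
    have hprod : 0 ≤ (s:ℝ) * (3 * Real.log 2 - 2) := by
      apply mul_nonneg (by linarith) (by linarith)
    nlinarith [hlog, hL, hprod]

/-- For any finite set `A ⊆ (ℝ/ℤ)^d` there is a small set of integer vectors `T` such that
every nonzero `w ∈ A` is detected by some `t ∈ T`: `‖t · w‖_{ℝ/ℤ} ≥ 1/4`. -/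
theorem integer_vectors_detect_nonzero :
    ∃ C : ℝ, 0 < C ∧
      ∀ (d : ℕ), 0 < d →
      ∀ (A : Finset (Fin d → AddCircle (1 : ℝ))),
        ∃ T : Finset (Fin d → ℤ),
          (T.card : ℝ) ≤ C * Real.log ((A.card : ℝ) + 2) ∧
          ∀ w ∈ A, w ≠ 0 → ∃ t ∈ T, (1 : ℝ) / 4 ≤ ‖∑ i, t i • w i‖ := by
  refine ⟨6, by norm_num, ?_⟩
  intro d _hd A
  classical
  obtain ⟨T, hTcard, hTdet⟩ := greedy A.card (A.filter (fun w => w ≠ 0))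
    (Finset.card_filter_le A _) (fun w hw => (Finset.mem_filter.mp hw).2)
  refine ⟨T, ?_, ?_⟩
  · calc (T.card : ℝ) ≤ (2 * Nat.size A.card : ℝ) := by exact_mod_cast hTcard
      _ ≤ 6 * Real.log (A.card + 2) := size_log_bound A.card
  · intro w hw hw0
    obtain ⟨t, htT, ht⟩ := hTdet w (Finset.mem_filter.mpr ⟨hw, hw0⟩)
    exact ⟨t, htT, by rw [phiHom_apply] at ht; exact ht⟩
end

section
/- Let d be a positive integer and let w ∈ (ℝ/ℤ)^d be nonzero. Then limsup_{M→∞} (2M+1)^{−d} · #{v ∈ ℤ^d : |v_j| ≤ M for all j, and ‖v₁w₁ + ⋯ + v_d w_d‖_{ℝ/ℤ} < 1/4} ≤ 3/4. -/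
private lemma aux_real (a τ : ℝ) (r1 r2 : ℤ) (ha : |a| < 1/4) (hτ1 : 1/3 ≤ τ) (hτ2 : τ ≤ 1/2)
    (h1 : |a + τ - r1| < 1/4) (h2 : |a + τ + τ - r2| < 1/4) : False := by
  rw [abs_lt] at ha h1 h2
  have hr1 : r1 = 0 := by
    have l1 : (r1 : ℝ) < 1 := by linarith
    have l2 : (-1 : ℝ) < r1 := by linarith
    have l1' : r1 < 1 := by exact_mod_cast l1
    have l2' : -1 < r1 := by exact_mod_cast l2
    omega
  rw [hr1] at h1
  push_cast at h1
  have l1 : (1:ℝ)/6 < r2 := by linarith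
  have l2 : (r2 : ℝ) < 1 := by linarith
  have l1' : 1 ≤ r2 := by
    by_contra h
    push_neg at h
    have : r2 ≤ 0 := by omega
    have : (r2 : ℝ) ≤ 0 := by exact_mod_cast this
    linarith
  have : (1:ℝ) ≤ r2 := by exact_mod_cast l1'
  linarith

private lemma coe_round_sub (y : ℝ) :
    ((y - (round y : ℤ) : ℝ) : AddCircle (1:ℝ)) = (y : AddCircle (1:ℝ)) := by
  have h : (((round y : ℤ) : ℝ) : AddCircle (1:ℝ)) = 0 := by
    rw [AddCircle.coe_eq_zero_iff]; exact ⟨round y, by simp⟩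
  have h2 : ((y - (round y : ℤ) : ℝ) : AddCircle (1:ℝ))
      = (y : AddCircle (1:ℝ)) - (((round y : ℤ) : ℝ) : AddCircle (1:ℝ)) := by norm_cast
  rw [h2, h, sub_zero]

private lemma norm_coe (y : ℝ) : ‖((y : ℝ) : AddCircle (1:ℝ))‖ = |y - round y| := by
  rw [AddCircle.norm_eq]; norm_num

private lemma three_point (x t : AddCircle (1:ℝ)) (ht : 1/3 ≤ ‖t‖)
    (h0 : ‖x‖ < 1/4) (h1 : ‖x + t‖ < 1/4) (h2 : ‖x + t + t‖ < 1/4) : False := by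
  obtain ⟨a₀, rfl⟩ := QuotientAddGroup.mk_surjective x
  obtain ⟨τ₀, rfl⟩ := QuotientAddGroup.mk_surjective t
  set a : ℝ := a₀ - round a₀ with ha_def
  set τ : ℝ := τ₀ - round τ₀ with hτ_def
  have hxa : (a : AddCircle (1:ℝ)) = (a₀ : AddCircle (1:ℝ)) := coe_round_sub a₀
  have htτ : (τ : AddCircle (1:ℝ)) = (τ₀ : AddCircle (1:ℝ)) := coe_round_sub τ₀
  have hna : |a| < 1/4 := by rw [norm_coe] at h0; exact h0
  have hnτ : 1/3 ≤ |τ| := by rw [norm_coe] at ht; exact ht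
  have hτhalf : |τ| ≤ 1/2 := abs_sub_round τ₀
  have h1' : |a + τ - round (a + τ)| < 1/4 := by
    rw [← norm_coe (a + τ)]
    have : ((a + τ : ℝ) : AddCircle (1:ℝ)) = (a₀ : AddCircle (1:ℝ)) + (τ₀ : AddCircle (1:ℝ)) := by
      rw [← hxa, ← htτ]; norm_cast
    rw [this]; exact h1
  have h2' : |a + τ + τ - round (a + τ + τ)| < 1/4 := by
    rw [← norm_coe (a + τ + τ)]
    have : ((a + τ + τ : ℝ) : AddCircle (1:ℝ))
        = (a₀ : AddCircle (1:ℝ)) + (τ₀ : AddCircle (1:ℝ)) + (τ₀ : AddCircle (1:ℝ)) := by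
      rw [← hxa, ← htτ]; norm_cast
    rw [this]; exact h2
  rcases abs_cases τ with ⟨hτe, _⟩ | ⟨hτe, _⟩
  · exact aux_real a τ (round (a + τ)) (round (a + τ + τ)) hna (by linarith)
      (by linarith) h1' h2'
  · refine aux_real (-a) (-τ) (-(round (a + τ))) (-(round (a + τ + τ)))
      (by rwa [abs_neg]) (by linarith) (by linarith) ?_ ?_
    · rw [show (-a + -τ - ((-(round (a+τ)) : ℤ) : ℝ)) = -(a + τ - round (a+τ)) by push_cast; ring,
        abs_neg]
      exact h1'
    · rw [show (-a + -τ + -τ - ((-(round (a+τ+τ)) : ℤ) : ℝ)) = -(a + τ + τ - round (a+τ+τ)) by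
        push_cast; ring, abs_neg]
      exact h2'

private lemma norm_coe' (y : ℝ) : ‖((y : ℝ) : AddCircle (1:ℝ))‖ = |y - round y| := by
  rw [AddCircle.norm_eq]; norm_num

private lemma coe_round_sub' (y : ℝ) :
    ((y - (round y : ℤ) : ℝ) : AddCircle (1:ℝ)) = (y : AddCircle (1:ℝ)) := by
  have h : (((round y : ℤ) : ℝ) : AddCircle (1:ℝ)) = 0 := by
    rw [AddCircle.coe_eq_zero_iff]; exact ⟨round y, by simp⟩
  have h2 : ((y - (round y : ℤ) : ℝ) : AddCircle (1:ℝ))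
      = (y : AddCircle (1:ℝ)) - (((round y : ℤ) : ℝ) : AddCircle (1:ℝ)) := by norm_cast
  rw [h2, h, sub_zero]

private lemma round_far (y : ℝ) (h1 : 1/3 ≤ |y|) (h2 : |y| < 2/3) :
    1/3 ≤ |y - round y| := by
  rcases (by omega : round y = 0 ∨ 1 ≤ round y ∨ round y ≤ -1) with h | h | h
  · rw [h]; simpa using h1
  · have ha : (1:ℝ) ≤ round y := by exact_mod_cast h
    have hb : y ≤ |y| := le_abs_self y
    have hc : (round y : ℝ) - y ≤ |y - round y| := by
      rw [abs_sub_comm]; exact le_abs_self _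
    linarith
  · have ha : ((round y : ℤ) : ℝ) ≤ -1 := by exact_mod_cast h
    have hb : -y ≤ |y| := neg_le_abs y
    have hc : y - round y ≤ |y - round y| := le_abs_self _
    linarith

private lemma exists_good (w : AddCircle (1:ℝ)) (hw : w ≠ 0) :
    ∃ n : ℕ, 0 < n ∧ 1/3 ≤ ‖(n : ℤ) • w‖ := by
  obtain ⟨a₀, rfl⟩ := QuotientAddGroup.mk_surjective w
  have hca : ((a₀ - round a₀ : ℝ) : AddCircle (1:ℝ)) = (a₀ : AddCircle (1:ℝ)) :=
    coe_round_sub' a₀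
  have hnorm : ‖(a₀ : AddCircle (1:ℝ))‖ = |a₀ - round a₀| := norm_coe' a₀
  have hapos : 0 < |a₀ - round a₀| := by
    rw [← hnorm]; exact norm_pos_iff.mpr hw
  have hhalf : |a₀ - round a₀| ≤ 1/2 := abs_sub_round a₀
  set α : ℝ := |a₀ - round a₀| with hα
  have step : ∀ n : ℕ, 1/3 ≤ (n : ℝ) * α → (n : ℝ) * α < 2/3 →
      1/3 ≤ ‖(n : ℤ) • (a₀ : AddCircle (1:ℝ))‖ := by
    intro n hlo hhi
    have hsm : (n : ℤ) • (a₀ : AddCircle (1:ℝ))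
        = (((n : ℝ) * (a₀ - round a₀) : ℝ) : AddCircle (1:ℝ)) := by
      rw [← hca, ← AddCircle.coe_zsmul]
      norm_num [zsmul_eq_mul]
    rw [hsm, norm_coe']
    apply round_far
    · rwa [abs_mul, Nat.abs_cast]
    · rwa [abs_mul, Nat.abs_cast]
  by_cases hbig : 1/3 ≤ α
  · exact ⟨1, one_pos, step 1 (by simpa using hbig) (by push_cast; linarith)⟩
  · push_neg at hbig
    refine ⟨⌈1 / (3 * α)⌉₊, Nat.ceil_pos.mpr (by positivity), step _ ?_ ?_⟩
    · have h1 : 1 / (3 * α) ≤ (⌈1 / (3 * α)⌉₊ : ℝ) := Nat.le_ceil _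
      rw [div_le_iff₀ (by positivity)] at h1
      linarith
    · have h2 : (⌈1 / (3 * α)⌉₊ : ℝ) < 1 / (3 * α) + 1 := Nat.ceil_lt_add_one (by positivity)
      have h4 : (1 / (3 * α)) * α = 1/3 := by field_simp
      nlinarith

open scoped BigOperators

/-- For a nonzero `w ∈ (ℝ/ℤ)^d`, the upper density of integer vectors `v` in the box
`[-M, M]^d` with `‖v · w‖_{ℝ/ℤ} < 1/4` is at most `3/4`. -/
theorem upper_density_detecting_vectors (d : ℕ) (hd : 0 < d)
    (w : Fin d → AddCircle (1 : ℝ)) (hw : w ≠ 0) :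
    Filter.limsup
      (fun M : ℕ =>
        (((Fintype.piFinset (fun _ : Fin d => Finset.Icc (-(M : ℤ)) (M : ℤ))).filter
            (fun v => ‖∑ i, v i • w i‖ < 1 / 4)).card : ℝ) / (2 * (M : ℝ) + 1) ^ d)
      Filter.atTop ≤ 3 / 4 := by
  obtain ⟨j, hj⟩ := Function.ne_iff.mp hw
  obtain ⟨n, hn0, hnt⟩ := exists_good (w j) hj
  set t : AddCircle (1:ℝ) := (n : ℤ) • w j with ht_def
  set S : ℕ → Finset (Fin d → ℤ) := fun M =>
    (Fintype.piFinset (fun _ : Fin d => Finset.Icc (-(M : ℤ)) (M : ℤ))).filter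
      (fun v => ‖∑ i, v i • w i‖ < 1 / 4) with hS_def
  have key : ∀ M : ℕ, 3 * (S M).card ≤ 2 * ((2*M + 2*n + 1) * (2*M + 1)^(d-1)) := by
    intro M
    set B' : Finset (Fin d → ℤ) :=
      Fintype.piFinset (fun i => Finset.Icc (if i = j then -(M:ℤ) - 2*n else -(M:ℤ)) (M:ℤ))
      with hB'_def
    set T : ℤ → Finset (Fin d → ℤ) := fun k =>
      B'.filter (fun u => ‖(∑ i, u i • w i) + k • t‖ < 1/4) with hT_def
    have hsum : ∀ (c : ℤ) (v : Fin d → ℤ),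
        ∑ i, (Function.update v j (v j - c)) i • w i = (∑ i, v i • w i) - c • w j := by
      intro c v
      rw [← Finset.add_sum_erase _ (fun i => Function.update v j (v j - c) i • w i)
          (Finset.mem_univ j),
        ← Finset.add_sum_erase _ (fun i => v i • w i) (Finset.mem_univ j),
        Finset.sum_congr rfl
          (fun i hi => by rw [Function.update_of_ne (Finset.ne_of_mem_erase hi)])]
      rw [Function.update_self, sub_smul]
      abel
    have hST : ∀ k : ℤ, 0 ≤ k → k ≤ 2 → (S M).card ≤ (T k).card := by
      intro k hk0 hk2
      have hkn0 : 0 ≤ k * (n:ℤ) := mul_nonneg hk0 (by positivity)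
      have hkn2 : k * (n:ℤ) ≤ 2 * n := mul_le_mul_of_nonneg_right hk2 (by positivity)
      apply Finset.card_le_card_of_injOn (fun v => Function.update v j (v j - k * n))
      · intro v hv
        beta_reduce
        rw [hS_def, Finset.mem_coe, Finset.mem_filter, Fintype.mem_piFinset] at hv
        obtain ⟨hv1, hv2⟩ := hv
        rw [hT_def, Finset.mem_coe, Finset.mem_filter]
        constructor
        · rw [hB'_def, Fintype.mem_piFinset]
          intro i
          by_cases hij : i = j
          · subst hij
            have hb := hv1 i
            rw [Finset.mem_Icc] at hb ⊢
            rw [Function.update_self, if_pos rfl]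
            constructor <;> linarith [hb.1, hb.2]
          · rw [Function.update_of_ne hij, if_neg hij]
            exact hv1 i
        · rw [hsum]
          have h1 : k • t = (k * (n:ℤ)) • w j := by rw [ht_def, smul_smul]
          rw [h1, sub_add_cancel]
          exact hv2
      · intro v1 hv1 v2 hv2 heq
        funext i
        by_cases hij : i = j
        · subst hij
          have := congrFun heq i
          simp only [Function.update_self] at this
          exact sub_left_inj.mp this
        · have := congrFun heq i
          simpa only [Function.update_of_ne hij] using this
    have hpt : ∀ u : Fin d → ℤ, ¬(‖(∑ i, u i • w i) + (0:ℤ) • t‖ < 1/4 ∧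
        ‖(∑ i, u i • w i) + (1:ℤ) • t‖ < 1/4 ∧ ‖(∑ i, u i • w i) + (2:ℤ) • t‖ < 1/4) := by
      rintro u ⟨h0, h1, h2⟩
      refine three_point (∑ i, u i • w i) t hnt ?_ ?_ ?_
      · simpa using h0
      · simpa using h1
      · rw [two_zsmul, ← add_assoc] at h2
        exact h2
    have hT2 : (T 0).card + (T 1).card + (T 2).card ≤ 2 * B'.card := by
      have hc : ∀ k : ℤ, (T k).card
          = ∑ u ∈ B', if ‖(∑ i, u i • w i) + k • t‖ < 1/4 then 1 else 0 := by
        intro k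
        rw [hT_def, Finset.card_filter]
      rw [hc 0, hc 1, hc 2, ← Finset.sum_add_distrib, ← Finset.sum_add_distrib]
      have h2B : 2 * B'.card = ∑ _u ∈ B', 2 := by
        rw [Finset.sum_const, smul_eq_mul, mul_comm]
      rw [h2B]
      apply Finset.sum_le_sum
      intro u hu
      have hp := hpt u
      split_ifs with h0 h1 h2 <;> try omega
      exact absurd ⟨h0, h1, h2⟩ hp
    have hB'card : B'.card = (2*M + 2*n + 1) * (2*M + 1)^(d-1) := by
      rw [hB'_def, Fintype.card_piFinset,
        ← Finset.mul_prod_erase Finset.univ _ (Finset.mem_univ j)]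
      have h1 : (Finset.Icc (if j = j then -(M:ℤ) - 2*n else -(M:ℤ)) (M:ℤ)).card
          = 2*M + 2*n + 1 := by
        rw [if_pos rfl, Int.card_Icc]
        omega
      have h2 : ∏ i ∈ Finset.univ.erase j,
          (Finset.Icc (if i = j then -(M:ℤ) - 2*n else -(M:ℤ)) (M:ℤ)).card
          = (2*M + 1)^(d-1) := by
        rw [Finset.prod_congr rfl (fun i hi => ?_), Finset.prod_const,
          Finset.card_erase_of_mem (Finset.mem_univ j), Finset.card_univ, Fintype.card_fin]
        rw [if_neg (Finset.ne_of_mem_erase hi), Int.card_Icc]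
        omega
      rw [h1, h2]
    calc 3 * (S M).card = (S M).card + (S M).card + (S M).card := by ring
      _ ≤ (T 0).card + (T 1).card + (T 2).card := by
          have h0 := hST 0 (by norm_num) (by norm_num)
          have h1 := hST 1 (by norm_num) (by norm_num)
          have h2 := hST 2 (by norm_num) (by norm_num)
          omega
      _ ≤ 2 * B'.card := hT2
      _ = 2 * ((2*M + 2*n + 1) * (2*M + 1)^(d-1)) := by rw [hB'card]
  apply Filter.limsup_le_of_le
  · exact Filter.isCoboundedUnder_le_of_le Filter.atTop (x := 0) (fun M => by positivity)
  · rw [Filter.eventually_atTop]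
    refine ⟨8*n, fun M hM => ?_⟩
    have hP : (0:ℝ) < (2*(M:ℝ)+1)^d := by positivity
    rw [div_le_iff₀ hP]
    have hk := key M
    have h8 : 8*(2*M+2*n+1) ≤ 9*(2*M+1) := by omega
    have hd' : (2*M+1)^d = (2*M+1)*(2*M+1)^(d-1) := by
      conv_lhs => rw [show d = (d-1)+1 by omega]
      rw [pow_succ]; ring
    have hnat : 12 * (S M).card ≤ 9 * (2*M+1)^d := by
      calc 12 * (S M).card = 4*(3*(S M).card) := by ring
        _ ≤ 4*(2*((2*M+2*n+1)*(2*M+1)^(d-1))) := Nat.mul_le_mul_left 4 hk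
        _ = (8*(2*M+2*n+1))*(2*M+1)^(d-1) := by ring
        _ ≤ (9*(2*M+1))*(2*M+1)^(d-1) := Nat.mul_le_mul_right _ h8
        _ = 9*(2*M+1)^d := by rw [hd']; ring
    have hcast : (12:ℝ) * (S M).card ≤ 9 * (2*(M:ℝ)+1)^d := by
      have := hnat
      have h' : ((12 * (S M).card : ℕ) : ℝ) ≤ ((9 * (2*M+1)^d : ℕ) : ℝ) := by
        exact_mod_cast this
      push_cast at h'
      convert h' using 2
    linarith
end
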